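/- Let X be a Petri curve, g ≥ 2, s ≥ 3 integers and d an integer with d < s + 2g − 4g/(s+2). Set r := ⌈(2+s)/2⌉. Then r + g − 1 − g/r > d/2 (as rational numbers). Consequently, any semistable rank-2 bundle E of degree d admits no line subbundle F with h⁰(F) ≥ r and β(1, deg F, r) ≥ 0. -/

import Mathlib

/-- Let g ≥ 2, s ≥ 3 and d be integers with d < s + 2g − 4g/(s+2) (in ℚ), and set
r := ⌈(2+s)/2⌉.  Then r + g − 1 − g/r > d/2 in ℚ.  Consequently, for any line
subbundle F of a semistable rank-2 degree-d bundle (so deg F ≤ d/2), the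
Brill-Noether number β(1, deg F, r) = g − r(r − 1 − deg F + g) is negative, so F
cannot have h⁰(F) ≥ r on a Petri curve. -/
theorem stmt_15 (g s d : ℤ) (hg : 2 ≤ g) (hs : 3 ≤ s)
    (hd : (d : ℚ) < (s : ℚ) + 2 * g - 4 * g / (s + 2)) :
    ((⌈((2 + s : ℚ)) / 2⌉ : ℚ) + g - 1 - (g : ℚ) / (⌈((2 + s : ℚ)) / 2⌉ : ℚ)
        > (d : ℚ) / 2) ∧
    (∀ e : ℤ, (e : ℚ) ≤ (d : ℚ) / 2 →
      g - ⌈((2 + s : ℚ)) / 2⌉ * (⌈((2 + s : ℚ)) / 2⌉ - 1 - e + g) < 0) := by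
  set r : ℤ := ⌈((2 + s : ℚ)) / 2⌉ with hrdef
  have hsq : (3 : ℚ) ≤ (s : ℚ) := by exact_mod_cast hs
  have hgq : (2 : ℚ) ≤ (g : ℚ) := by exact_mod_cast hg
  have hs2 : (0 : ℚ) < (s : ℚ) + 2 := by linarith
  have hr1 : ((2 + s : ℚ)) / 2 ≤ (r : ℚ) := Int.le_ceil _
  have hrpos : (0 : ℚ) < (r : ℚ) := by linarith
  -- g/r ≤ 2g/(s+2)
  have hdiv : (g : ℚ) / r ≤ 2 * g / ((s : ℚ) + 2) := by
    rw [div_le_div_iff₀ hrpos hs2]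
    nlinarith
  have key : (d : ℚ) / 2 < (r : ℚ) + g - 1 - (g : ℚ) / r := by
    have h1 : (d : ℚ) / 2 < (s : ℚ) / 2 + g - 2 * g / ((s : ℚ) + 2) := by
      have : 4 * (g : ℚ) / ((s : ℚ) + 2) = 2 * (2 * g / ((s : ℚ) + 2)) := by
        ring
      linarith [hd, this]
    linarith
  refine ⟨key, fun e he => ?_⟩
  have he' : (e : ℚ) < (r : ℚ) + g - 1 - (g : ℚ) / r := lt_of_le_of_lt he key
  have hmul : (e : ℚ) * r < ((r : ℚ) + g - 1) * r - g := by
    have := mul_lt_mul_of_pos_right he' hrpos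
    have hdr : (g : ℚ) / r * r = g := div_mul_cancel₀ _ (ne_of_gt hrpos)
    nlinarith
  have : (g : ℚ) - (r : ℚ) * ((r : ℚ) - 1 - e + g) < 0 := by nlinarith
  exact_mod_cast this
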